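/- Let 0 ≤ m₀ ≤ m₁ be real numbers and let k ≥ 1 be a natural number. Define the Poisson-based probability of correct decision with equiprobable states as P_c = (1/2)·(∑_{x=k}^∞ Poi(x;m₁) + ∑_{x=0}^{k-1} Poi(x;m₀)), and define the vector (Helstrom) probability of correct decision as Q_c = (1/2)·(1 + √(1 − e^{−(m₁−m₀)})). Then Q_c ≥ P_c. -/

import Mathlib

/-- Poisson probability mass function with mean `m` evaluated at `x`
(with the convention `0 ^ 0 = 1`). -/
noncomputable def poi (m : ℝ) (x : ℕ) : ℝ := Real.exp (-m) * m ^ x / (Nat.factorial x)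

lemma summable_poi (m : ℝ) : Summable (poi m) := by
  exact ((Real.summable_pow_div_factorial m).mul_left (Real.exp (-m))).congr
    (fun x => by simp [poi, mul_div_assoc])

lemma tsum_poi (m : ℝ) : ∑' x, poi m x = 1 := by
  have h : ∑' x : ℕ, m ^ x / (Nat.factorial x) = Real.exp m := by
    rw [Real.exp_eq_exp_ℝ, NormedSpace.exp_eq_tsum_div]
  have : ∑' x, poi m x = Real.exp (-m) * ∑' x : ℕ, m ^ x / (Nat.factorial x) := by
    rw [← tsum_mul_left]
    simp [poi, mul_div_assoc]
  rw [this, h, ← Real.exp_add]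
  simp

lemma poi_nonneg {m : ℝ} (hm : 0 ≤ m) (x : ℕ) : 0 ≤ poi m x := by
  unfold poi
  positivity

/-- The vector (Helstrom) probability of correct decision is at least the Poisson-based
probability of correct decision, for equiprobable states. -/
theorem vector_prob_correct_ge_poisson (m₀ m₁ : ℝ) (hm₀ : 0 ≤ m₀) (hm : m₀ ≤ m₁)
    (k : ℕ) (hk : 1 ≤ k) :
    (1 / 2) * (1 + Real.sqrt (1 - Real.exp (-(m₁ - m₀)))) ≥
      (1 / 2) * ((∑' x : ℕ, if k ≤ x then poi m₁ x else 0) +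
        ∑ x ∈ Finset.range k, poi m₀ x) := by
  have hm₁ : 0 ≤ m₁ := hm₀.trans hm
  set δ := m₁ - m₀ with hδdef
  have hδ : 0 ≤ δ := sub_nonneg.2 hm
  set a := 1 - Real.exp (-δ) with hadef
  have hexp_le : Real.exp (-δ) ≤ 1 := Real.exp_le_one_iff.mpr (neg_nonpos.2 hδ)
  have ha0 : 0 ≤ a := by rw [hadef]; linarith
  have ha1 : a ≤ 1 := by
    have := Real.exp_pos (-δ); rw [hadef]; linarith
  -- tsum of the tail equals 1 - partial sum
  have hsum1 : Summable (poi m₁) := summable_poi m₁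
  have hsub : Summable (fun x : ℕ => if k ≤ x then poi m₁ x else 0) := by
    apply Summable.of_nonneg_of_le (fun x => ?_) (fun x => ?_) hsum1
    · by_cases h : k ≤ x <;> simp [h, poi_nonneg hm₁]
    · by_cases h : k ≤ x <;> simp [h, poi_nonneg hm₁]
  have hcompl : Summable (fun x : ℕ => if k ≤ x then 0 else poi m₁ x) := by
    apply summable_of_ne_finset_zero (s := Finset.range k)
    intro x hx
    simp only [Finset.mem_range, not_lt] at hx
    simp [hx]
  have hs : ∑' x : ℕ, (if k ≤ x then (0:ℝ) else poi m₁ x)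
      = ∑ x ∈ Finset.range k, poi m₁ x := by
    rw [tsum_eq_sum (s := Finset.range k)]
    · refine Finset.sum_congr rfl (fun x hx => ?_)
      simp only [Finset.mem_range] at hx
      simp [Nat.not_le.2 hx]
    · intro x hx
      simp only [Finset.mem_range, not_lt] at hx
      simp [hx]
  have hadd : (∑' x : ℕ, if k ≤ x then poi m₁ x else 0)
      + ∑' x : ℕ, (if k ≤ x then (0:ℝ) else poi m₁ x) = 1 := by
    rw [← Summable.tsum_add hsub hcompl, ← tsum_poi m₁]
    congr 1
    funext x
    by_cases h : k ≤ x <;> simp [h]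
  have hite : (∑' x : ℕ, if k ≤ x then poi m₁ x else 0)
      = 1 - ∑ x ∈ Finset.range k, poi m₁ x := by
    rw [← hs]; linarith
  rw [hite]
  -- key pointwise bound
  have hpt : ∀ x, poi m₀ x - poi m₁ x ≤ a * poi m₀ x := by
    intro x
    have hpow : m₀ ^ x ≤ m₁ ^ x := pow_le_pow_left₀ hm₀ hm x
    have hE : Real.exp (-m₁) = Real.exp (-δ) * Real.exp (-m₀) := by
      rw [← Real.exp_add, hδdef]; ring_nf
    have h1 : Real.exp (-δ) * poi m₀ x ≤ poi m₁ x := by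
      unfold poi
      rw [hE, mul_div_assoc, mul_div_assoc, ← mul_assoc]
      gcongr
    have : (1 - a) * poi m₀ x ≤ poi m₁ x := by
      simpa [hadef] using h1
    linarith
  have hS0le : ∑ x ∈ Finset.range k, poi m₀ x ≤ 1 := by
    rw [← tsum_poi m₀]
    exact Summable.sum_le_tsum _ (fun x _ => poi_nonneg hm₀ x) (summable_poi m₀)
  have hS0nn : 0 ≤ ∑ x ∈ Finset.range k, poi m₀ x :=
    Finset.sum_nonneg (fun x _ => poi_nonneg hm₀ x)
  have hdiff : ∑ x ∈ Finset.range k, poi m₀ x - ∑ x ∈ Finset.range k, poi m₁ x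
      ≤ a := by
    have h1 : ∑ x ∈ Finset.range k, poi m₀ x - ∑ x ∈ Finset.range k, poi m₁ x
        = ∑ x ∈ Finset.range k, (poi m₀ x - poi m₁ x) := by
      rw [Finset.sum_sub_distrib]
    have h2 : ∑ x ∈ Finset.range k, (poi m₀ x - poi m₁ x)
        ≤ ∑ x ∈ Finset.range k, a * poi m₀ x :=
      Finset.sum_le_sum (fun x _ => hpt x)
    have h3 : ∑ x ∈ Finset.range k, a * poi m₀ x = a * ∑ x ∈ Finset.range k, poi m₀ x := by
      rw [Finset.mul_sum]
    nlinarith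
  have hsqrt : a ≤ Real.sqrt a := by
    nlinarith [Real.sq_sqrt ha0, Real.sqrt_nonneg a]
  linarith
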